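/- For every n ∈ ℕ₀, the sum of absolute values of the coefficients c_{n,j} of the normalized probabilists' Hermite polynomial H_n(x) = Σ_{j=0}^n c_{n,j} x^j satisfies Σ_{j=0}^n |c_{n,j}| ≤ 6^{n/2} ≤ 3^n. -/

import Mathlib

open Nat Polynomial Finset

lemma dfac_le_dfac_succ (n : ℕ) : n‼ ≤ (n+1)‼ := by
  induction n using Nat.strong_induction_on with
  | _ n ih =>
    match n with
    | 0 => simp [Nat.doubleFactorial]
    | 1 => simp [Nat.doubleFactorial]
    | (m+2) =>
      rw [Nat.doubleFactorial_add_two, show m+2+1 = m+1+2 from rfl, Nat.doubleFactorial_add_two]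
      exact Nat.mul_le_mul (by omega) (ih m (by omega))

lemma dfac_mul_dfac (j : ℕ) : (2*j-1)‼ * (2*j)‼ = (2*j)! := by
  cases j with
  | zero => rfl
  | succ m =>
    have h : 2*(m+1) = (2*m+1) + 1 := by ring
    rw [h, Nat.factorial_eq_mul_doubleFactorial, Nat.mul_comm]
    norm_num

lemma key_nat (j k : ℕ) : ((2*j-1)‼)^2 * ((2*j+k).choose k) ≤ (2*j+k)! := by
  have h1 : ((2*j-1)‼)^2 ≤ (2*j)! := by
    rw [pow_two, ← dfac_mul_dfac j]
    refine Nat.mul_le_mul_left _ ?_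
    have := dfac_le_dfac_succ (2*j-1)
    rcases Nat.eq_zero_or_pos j with hj | hj
    · subst hj; simp
    · have hmono := dfac_le_dfac_succ (2*j-1)
      have h' : 2*j-1+1 = 2*j := by omega
      rwa [h'] at hmono

  calc ((2*j-1)‼)^2 * ((2*j+k).choose k) ≤ (2*j)! * ((2*j+k).choose k) :=
        Nat.mul_le_mul_right _ h1
    _ ≤ ((2*j+k).choose k) * k.factorial * (2*j)! := by
        rw [Nat.mul_comm]
        exact Nat.mul_le_mul_right _ (Nat.le_mul_of_pos_right _ k.factorial_pos)
    _ = (2*j+k)! := by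
        have := Nat.choose_mul_factorial_mul_factorial (show k ≤ 2*j+k by omega)
        simpa using this

lemma term_le (n k : ℕ) (hk : k ≤ n) :
    |((Polynomial.hermite n).coeff k : ℝ)| / Real.sqrt (n.factorial : ℝ)
      ≤ Real.sqrt (n.choose k) := by
  have hfac : (0:ℝ) < Real.sqrt (n.factorial : ℝ) := by
    apply Real.sqrt_pos.2; exact_mod_cast n.factorial_pos
  rcases Nat.even_or_odd (n + k) with he | ho
  · -- even case
    rw [Nat.even_add, ← Nat.even_sub hk] at he
    obtain ⟨j, hj⟩ := he
    have hn : n = 2*j + k := by omega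
    subst hn
    rw [Polynomial.coeff_hermite_explicit j k]
    push_cast
    rw [abs_mul, abs_mul, abs_pow, abs_neg, abs_one, one_pow, one_mul,
      Nat.abs_cast, Nat.abs_cast]
    rw [div_le_iff₀ hfac]
    have hM2 : (((2*j-1)‼ : ℝ) * ((2*j+k).choose k))^2
        ≤ ((2*j+k).factorial : ℝ) * ((2*j+k).choose k) := by
      have := key_nat j k
      have h2 : ((2*j-1)‼)^2 * ((2*j+k).choose k) * ((2*j+k).choose k)
          ≤ (2*j+k)! * ((2*j+k).choose k) := Nat.mul_le_mul_right _ this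
      calc (((2*j-1)‼ : ℝ) * ((2*j+k).choose k))^2
          = ((((2*j-1)‼)^2 * ((2*j+k).choose k) * ((2*j+k).choose k) : ℕ) : ℝ) := by
            push_cast; ring
        _ ≤ (((2*j+k)! * ((2*j+k).choose k) : ℕ) : ℝ) := by exact_mod_cast h2
        _ = ((2*j+k).factorial : ℝ) * ((2*j+k).choose k) := by push_cast; ring
    have hM : (0:ℝ) ≤ ((2*j-1)‼ : ℝ) * ((2*j+k).choose k) := by positivity
    calc ((2*j-1)‼ : ℝ) * ((2*j+k).choose k)
        = Real.sqrt ((((2*j-1)‼ : ℝ) * ((2*j+k).choose k))^2) := (Real.sqrt_sq hM).symm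
      _ ≤ Real.sqrt (((2*j+k).factorial : ℝ) * ((2*j+k).choose k)) :=
          Real.sqrt_le_sqrt hM2
      _ = Real.sqrt (((2*j+k).choose k : ℝ)) * Real.sqrt ((2*j+k).factorial : ℝ) := by
          rw [← Real.sqrt_mul (by positivity), mul_comm]
  · rw [Polynomial.coeff_hermite_of_odd_add ho]
    simp [Real.sqrt_nonneg]

/-- For every `n`, the coefficients `c_{n,j}` of the normalized probabilists' Hermite
polynomial `H_n(x) = Σ_{j=0}^n c_{n,j} x^j` (i.e. `c_{n,j} = (hermite n).coeff j / √(n!)`)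
satisfy `Σ_{j=0}^n |c_{n,j}| ≤ 6^{n/2} ≤ 3^n`. -/
theorem hermite_coeff_abs_sum_le (n : ℕ) :
    ∑ j ∈ Finset.range (n + 1),
        |((Polynomial.hermite n).coeff j : ℝ)| / Real.sqrt (n.factorial : ℝ)
      ≤ 6 ^ ((n : ℝ) / 2) ∧ (6 : ℝ) ^ ((n : ℝ) / 2) ≤ 3 ^ n := by
  have h6 : (6:ℝ) ^ ((n : ℝ) / 2) = Real.sqrt ((6:ℝ)^n) := by
    rw [Real.sqrt_eq_rpow, ← Real.rpow_natCast (6:ℝ) n, ← Real.rpow_mul (by norm_num)]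
    congr 1; ring
  constructor
  · -- main bound
    have step1 : ∑ j ∈ Finset.range (n + 1),
        |((Polynomial.hermite n).coeff j : ℝ)| / Real.sqrt (n.factorial : ℝ)
        ≤ ∑ j ∈ Finset.range (n + 1), Real.sqrt (n.choose j) := by
      apply Finset.sum_le_sum
      intro j hj
      exact term_le n j (by simpa using Nat.lt_succ_iff.mp (Finset.mem_range.mp hj))
    have step2 : (∑ j ∈ Finset.range (n + 1), Real.sqrt (n.choose j))^2
        ≤ (n+1 : ℝ) * (2:ℝ)^n := by
      calc (∑ j ∈ Finset.range (n + 1), Real.sqrt (n.choose j))^2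
          ≤ (Finset.range (n+1)).card * ∑ j ∈ Finset.range (n + 1), (Real.sqrt (n.choose j))^2 :=
            sq_sum_le_card_mul_sum_sq
        _ = (n+1 : ℝ) * ∑ j ∈ Finset.range (n + 1), ((n.choose j : ℝ)) := by
            rw [Finset.card_range]
            congr 1
            · push_cast; ring
            · apply Finset.sum_congr rfl
              intro j _
              exact Real.sq_sqrt (by positivity)
        _ = (n+1 : ℝ) * (2:ℝ)^n := by
            congr 1
            rw [← Nat.cast_sum]
            rw [Nat.sum_range_choose]
            push_cast; ring
    have step3 : ((n:ℝ)+1) * (2:ℝ)^n ≤ (6:ℝ)^n := by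
      have hn3 : (n:ℝ)+1 ≤ (3:ℝ)^n := by
        have := (Nat.lt_two_pow_self (n := n))
        have h23 : (2:ℝ)^n ≤ (3:ℝ)^n := pow_le_pow_left₀ (by norm_num) (by norm_num) n
        have : (n:ℝ)+1 ≤ (2:ℝ)^n := by exact_mod_cast (Nat.lt_two_pow_self (n := n))
        linarith
      calc ((n:ℝ)+1) * (2:ℝ)^n ≤ (3:ℝ)^n * (2:ℝ)^n := by
            apply mul_le_mul_of_nonneg_right hn3 (by positivity)
        _ = (6:ℝ)^n := by rw [← mul_pow]; norm_num
    rw [h6]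
    refine le_trans step1 ?_
    have hS : (0:ℝ) ≤ ∑ j ∈ Finset.range (n + 1), Real.sqrt (n.choose j) :=
      Finset.sum_nonneg fun j _ => Real.sqrt_nonneg _
    calc ∑ j ∈ Finset.range (n + 1), Real.sqrt (n.choose j)
        = Real.sqrt ((∑ j ∈ Finset.range (n + 1), Real.sqrt (n.choose j))^2) :=
          (Real.sqrt_sq hS).symm
      _ ≤ Real.sqrt ((6:ℝ)^n) := Real.sqrt_le_sqrt (le_trans step2 step3)
  · rw [h6]
    calc Real.sqrt ((6:ℝ)^n) ≤ Real.sqrt (((3:ℝ)^n)^2) := by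
          apply Real.sqrt_le_sqrt
          rw [← pow_mul]
          calc (6:ℝ)^n ≤ (9:ℝ)^n := pow_le_pow_left₀ (by norm_num) (by norm_num) n
            _ = (3:ℝ)^(n*2) := by rw [mul_comm, pow_mul]; norm_num
      _ = (3:ℝ)^n := Real.sqrt_sq (by positivity)
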